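/- There is no square-free P_4-word of length 16. -/

import Mathlib

def SqFree {α : Type*} (w : List α) : Prop :=
  ∀ u : List α, u ≠ [] → ¬ (u ++ u) <:+: w

/-- Adjacency in the path `P₄` on `{0,1,2,3}` with edges `01`, `12`, `23`. -/
def P4Adj (a b : Fin 4) : Prop := a.val + 1 = b.val ∨ b.val + 1 = a.val

instance : ∀ a b, Decidable (P4Adj a b) := fun a b =>
  inferInstanceAs (Decidable (a.val + 1 = b.val ∨ b.val + 1 = a.val))

/-- Boolean chain check for `P4Adj`. -/
def chainB : List (Fin 4) → Bool
  | a :: b :: t => decide (P4Adj a b) && chainB (b :: t)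
  | _ => true

lemma chainB_of : ∀ {w : List (Fin 4)}, w.Chain' P4Adj → chainB w = true
  | [], _ => rfl
  | [_], _ => rfl
  | a :: b :: t, h => by
      replace h := (List.isChain_cons_cons (R := P4Adj)).mp h
      simp [chainB, h.1, chainB_of h.2]

/-- Boolean square-freeness check. -/
def sqFreeB (w : List (Fin 4)) : Bool :=
  (List.range w.length).all fun i =>
    (List.range w.length).all fun l =>
      decide (l = 0) || decide (w.length < i + l + l) ||
        !decide ((w.drop i).take l = (w.drop (i + l)).take l)

lemma sqFree_to_B {w : List (Fin 4)} (h : SqFree w) : sqFreeB w = true := by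
  unfold sqFreeB
  simp only [List.all_eq_true, List.mem_range, Bool.or_eq_true, decide_eq_true_eq,
    Bool.not_eq_true', decide_eq_false_iff_not]
  intro i _ l _
  by_cases hl : l = 0
  · exact Or.inl (Or.inl hl)
  by_cases hlen : w.length < i + l + l
  · exact Or.inl (Or.inr hlen)
  push_neg at hlen
  right
  intro heq
  have hune : (w.drop i).take l ≠ [] := by
    have hlt : ((w.drop i).take l).length = l := by
      rw [List.length_take, List.length_drop]; omega
    intro h0; rw [h0] at hlt; simp at hlt; omega
  apply h _ hune
  have key : (w.drop i).take l ++ (w.drop i).take l = (w.drop i).take (l + l) := by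
    rw [List.take_add, List.drop_drop]
    congr 1
  rw [key]
  exact (List.take_prefix _ _).isInfix.trans (List.drop_suffix i w).isInfix

/-- One extension step: prepend every letter that keeps the word a square-free chain. -/
def step (ws : List (List (Fin 4))) : List (List (Fin 4)) :=
  ws.flatMap fun w =>
    ([0, 1, 2, 3] : List (Fin 4)).filterMap fun b =>
      if chainB (b :: w) && sqFreeB (b :: w) then some (b :: w) else none

/-- All square-free chain words of length `n`. -/
def words (n : ℕ) : List (List (Fin 4)) := Nat.rec [[]] (fun _ ws => step ws) n

lemma sqFree_tail {b : Fin 4} {w : List (Fin 4)} (h : SqFree (b :: w)) : SqFree w :=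
  fun u hu hi => h u hu (hi.trans (List.suffix_cons b w).isInfix)

lemma mem_words : ∀ (n : ℕ) (w : List (Fin 4)), w.Chain' P4Adj → SqFree w →
    w.length = n → w ∈ words n := by
  intro n
  induction n with
  | zero => intro w _ _ hl; rw [List.length_eq_zero_iff] at hl; simp [hl, words]
  | succ n ih =>
    intro w hc hs hl
    match w with
    | b :: rest =>
      have hrest : rest ∈ words n := ih rest hc.tail (sqFree_tail hs) (by simpa using hl)
      show b :: rest ∈ step (words n)
      simp only [step, List.mem_flatMap, List.mem_filterMap]
      refine ⟨rest, hrest, b, ?_, ?_⟩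
      · fin_cases b <;> simp
      · rw [if_pos]
        simp [chainB_of hc, sqFree_to_B hs]

/-- There is no square-free `P₄`-word of length 16. -/
theorem no_squarefree_P4_word_length_16 (w : List (Fin 4))
    (hwalk : w.Chain' P4Adj) (hlen : w.length = 16) : ¬ SqFree w := by
  intro hs
  have hmem := mem_words 16 w hwalk hs hlen
  have hw : words 16 = [] := by decide
  rw [hw] at hmem
  exact absurd hmem (List.not_mem_nil (a := w))
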